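/- Let N ≥ 2 and t ∈ ℝ. Let L be the 1×N quaternionic matrix with every entry equal to 1, and let M be the diagonal N×N quaternionic matrix with diagonal entries m₁ = cos(πt)·i + sin(πt)·j, m₂ = −cos(πt)·i − sin(πt)·j, and m_k = (k−1)·i for 3 ≤ k ≤ N. For x ∈ ℍ let Δ_x be the (N+1)×N quaternionic matrix with first row L and remaining block M − x·Id_N. Then for every x ∈ ℍ, Δ_x†·Δ_x equals the real N×N matrix J + D, where J is the all-ones matrix and D is the diagonal matrix with entries D_{kk} = |m_k − x|² (the squared quaternionic norm), and this real symmetric matrix is positive definite; in particular Δ_x†·Δ_x has real entries and is invertible for all x ∈ ℍ. -/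

import Mathlib

open Quaternion Matrix

/-- The `(N+1) × N` quaternionic ADHM operator `Δ_x` built from a `1 × N` row `L`
and an `N × N` matrix `M`: its first row is `L` and its remaining block is
`M − x·Id_N`. -/
noncomputable def adhmDelta (N : ℕ) (L : Matrix (Fin 1) (Fin N) ℍ[ℝ])
    (M : Matrix (Fin N) (Fin N) ℍ[ℝ]) (x : ℍ[ℝ]) : Matrix (Fin (N + 1)) (Fin N) ℍ[ℝ] :=
  Matrix.of fun i j =>
    Fin.cases (L 0 j) (fun i' => ((M - Matrix.diagonal fun _ => x : Matrix (Fin N) (Fin N) ℍ[ℝ]) i' j)) i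

/-- The diagonal entries of the loop of ADHM data exchanging two skyrmions:
`m₁ = cos(πt)·i + sin(πt)·j`, `m₂ = −cos(πt)·i − sin(πt)·j`, `m_k = (k−1)·i`
for `3 ≤ k ≤ N` (here indexed from `0`). -/
noncomputable def exchangeDiag (N : ℕ) (t : ℝ) : Fin N → ℍ[ℝ] := fun k =>
  if (k : ℕ) = 0 then ⟨0, Real.cos (Real.pi * t), Real.sin (Real.pi * t), 0⟩
  else if (k : ℕ) = 1 then ⟨0, -Real.cos (Real.pi * t), -Real.sin (Real.pi * t), 0⟩
  else ⟨0, ((k : ℕ) : ℝ), 0, 0⟩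

lemma exchangeDiag_imI (N : ℕ) (t : ℝ) (k : Fin N) : (exchangeDiag N t k).imI = if (k:ℕ)=0 then Real.cos (Real.pi * t) else if (k:ℕ)=1 then -Real.cos (Real.pi * t) else ((k:ℕ):ℝ) := by
  unfold exchangeDiag
  by_cases h1 : (k:ℕ)=0
  · exact (congrArg QuaternionAlgebra.imI (if_pos h1)).trans (if_pos h1).symm
  · by_cases h2 : (k:ℕ)=1
    · exact (congrArg QuaternionAlgebra.imI ((if_neg h1).trans (if_pos h2))).trans ((if_neg h1).trans (if_pos h2)).symm
    · exact (congrArg QuaternionAlgebra.imI ((if_neg h1).trans (if_neg h2))).trans ((if_neg h1).trans (if_neg h2)).symm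
lemma exchangeDiag_imJ (N : ℕ) (t : ℝ) (k : Fin N) : (exchangeDiag N t k).imJ = if (k:ℕ)=0 then Real.sin (Real.pi * t) else if (k:ℕ)=1 then -Real.sin (Real.pi * t) else 0 := by
  unfold exchangeDiag
  by_cases h1 : (k:ℕ)=0
  · exact (congrArg QuaternionAlgebra.imJ (if_pos h1)).trans (if_pos h1).symm
  · by_cases h2 : (k:ℕ)=1
    · exact (congrArg QuaternionAlgebra.imJ ((if_neg h1).trans (if_pos h2))).trans ((if_neg h1).trans (if_pos h2)).symm
    · exact (congrArg QuaternionAlgebra.imJ ((if_neg h1).trans (if_neg h2))).trans ((if_neg h1).trans (if_neg h2)).symm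

lemma exchangeDiag_injective (N : ℕ) (t : ℝ) : Function.Injective (exchangeDiag N t) := by
  intro a b h
  have hI := congrArg QuaternionAlgebra.imI h
  have hJ := congrArg QuaternionAlgebra.imJ h
  rw [exchangeDiag_imI, exchangeDiag_imI] at hI
  rw [exchangeDiag_imJ, exchangeDiag_imJ] at hJ
  have hc := Real.cos_le_one (Real.pi * t)
  have hc' := Real.neg_one_le_cos (Real.pi * t)
  have hsc := Real.sin_sq_add_cos_sq (Real.pi * t)
  split_ifs at hI hJ with h1 h2 h3 h4 h5 h6 h7 h8 h9 <;>
    (try simp only [QuaternionAlgebra.imI, QuaternionAlgebra.imJ] at hI hJ) <;>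
    first
    | (exact Fin.ext (by omega))
    | (exfalso; nlinarith)
    | (exfalso
       have hb2 : (2 : ℝ) ≤ ((b : ℕ) : ℝ) := by exact_mod_cast (by omega : 2 ≤ (b : ℕ))
       nlinarith)
    | (exfalso
       have hb2 : (2 : ℝ) ≤ ((a : ℕ) : ℝ) := by exact_mod_cast (by omega : 2 ≤ (a : ℕ))
       nlinarith)
    | (have : (a : ℕ) = (b : ℕ) := by exact_mod_cast hI
       exact Fin.ext this)

lemma adhm_entry (N : ℕ) (m : Fin N → ℍ[ℝ]) (x : ℍ[ℝ]) (a b : Fin N) :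
    ((adhmDelta N (Matrix.of fun _ _ => (1 : ℍ[ℝ])) (Matrix.diagonal m) x)ᴴ *
        adhmDelta N (Matrix.of fun _ _ => (1 : ℍ[ℝ])) (Matrix.diagonal m) x) a b
      = 1 + if a = b then ((Quaternion.normSq (m a - x) : ℝ) : ℍ[ℝ]) else 0 := by
  rw [Matrix.mul_apply]
  simp only [conjTranspose_apply, adhmDelta, Matrix.of_apply]
  rw [Fin.sum_univ_succ]
  simp only [Fin.cases_zero, Fin.cases_succ, Matrix.of_apply, star_one, one_mul,
    Matrix.sub_apply, Matrix.diagonal_apply]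
  congr 1
  have : ∀ i : Fin N,
      star ((if i = a then m i else 0) - if i = a then x else 0) *
        ((if i = b then m i else 0) - if i = b then x else 0)
      = if i = a then (if i = b then star (m a - x) * (m b - x) else 0) else 0 := by
    intro i
    by_cases hia : i = a <;> by_cases hib : i = b
    · simp [hia, hib, hia.symm.trans hib]
    · have hab : ¬ a = b := fun h => hib (hia.trans h)
      simp [hia, hab]
    · have hba : ¬ b = a := fun h => hia (hib.trans h)
      simp [hib, hba]
    · simp [hia, hib]
  simp_rw [this]
  rw [Finset.sum_ite_eq' Finset.univ a]
  simp only [Finset.mem_univ, if_true]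
  by_cases hab : a = b
  · subst hab
    simp only [if_pos rfl, if_true]
    exact Quaternion.star_mul_self (m a - x)
  · simp [hab]

/-- for the exchange loop of ADHM data with `L = (1, …, 1)` and
`M = diag(m₁, …, m_N)`, for every `x ∈ ℍ` one has `Δ_x†·Δ_x = J + D`, where `J` is
the real all-ones matrix and `D = diag(|m_k − x|²)`; this real symmetric matrix is
positive definite, so `Δ_x†·Δ_x` has real entries and is invertible for all `x`. -/
theorem adhm_exchange_loop_constraints (N : ℕ) (hN : 2 ≤ N) (t : ℝ) :
    ∀ x : ℍ[ℝ],
      ((adhmDelta N (Matrix.of fun _ _ => (1 : ℍ[ℝ])) (Matrix.diagonal (exchangeDiag N t)) x)ᴴ *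
          adhmDelta N (Matrix.of fun _ _ => (1 : ℍ[ℝ])) (Matrix.diagonal (exchangeDiag N t)) x
        = ((Matrix.of fun _ _ => (1 : ℝ)) +
            Matrix.diagonal fun a => Quaternion.normSq (exchangeDiag N t a - x)).map
              (fun r => (r : ℍ[ℝ]))) ∧
      Matrix.PosDef ((Matrix.of fun _ _ => (1 : ℝ)) +
          Matrix.diagonal fun a => Quaternion.normSq (exchangeDiag N t a - x)) ∧
      (∀ a b, ∃ r : ℝ,
        ((adhmDelta N (Matrix.of fun _ _ => (1 : ℍ[ℝ])) (Matrix.diagonal (exchangeDiag N t)) x)ᴴ *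
          adhmDelta N (Matrix.of fun _ _ => (1 : ℍ[ℝ])) (Matrix.diagonal (exchangeDiag N t)) x)
            a b = (r : ℍ[ℝ])) ∧
      IsUnit ((adhmDelta N (Matrix.of fun _ _ => (1 : ℍ[ℝ])) (Matrix.diagonal (exchangeDiag N t)) x)ᴴ *
          adhmDelta N (Matrix.of fun _ _ => (1 : ℍ[ℝ])) (Matrix.diagonal (exchangeDiag N t)) x) := by
  intro x
  set m : Fin N → ℍ[ℝ] := exchangeDiag N t with hm
  set d : Fin N → ℝ := fun a => Quaternion.normSq (m a - x) with hd
  have hdnn : ∀ a, 0 ≤ d a := fun a => Quaternion.normSq_nonneg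
  set A : Matrix (Fin N) (Fin N) ℝ :=
    (Matrix.of fun _ _ => (1 : ℝ)) + Matrix.diagonal d with hA
  -- part 1
  have hpart1 :
      ((adhmDelta N (Matrix.of fun _ _ => (1 : ℍ[ℝ])) (Matrix.diagonal m) x)ᴴ *
          adhmDelta N (Matrix.of fun _ _ => (1 : ℍ[ℝ])) (Matrix.diagonal m) x)
        = A.map (fun r => (r : ℍ[ℝ])) := by
    apply Matrix.ext
    intro a b
    rw [adhm_entry]
    simp only [hA, Matrix.map_apply, Matrix.add_apply, Matrix.of_apply, Matrix.diagonal_apply]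
    push_cast
    by_cases hab : a = b <;> simp [hab, hd]
  -- part 2: positive definiteness
  have hpd : A.PosDef := by
    rw [Matrix.posDef_iff_dotProduct_mulVec]
    constructor
    · apply Matrix.IsHermitian.add
      · ext i j
        simp [Matrix.conjTranspose_apply]
      · exact Matrix.isHermitian_diagonal d
    · intro v hv
      have expand : ∀ a, (A *ᵥ v) a = (∑ b, v b) + d a * v a := by
        intro a
        simp [hA, Matrix.mulVec, dotProduct, Matrix.add_apply, Matrix.of_apply,
          Matrix.diagonal_apply, add_mul, ite_mul, zero_mul, Finset.sum_add_distrib,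
          Finset.sum_ite_eq', one_mul]
      have hq : dotProduct (star v) (A *ᵥ v) = (∑ a, v a) ^ 2 + ∑ a, d a * (v a) ^ 2 := by
        simp only [dotProduct, Pi.star_apply, star_trivial, expand, mul_add,
          Finset.sum_add_distrib]
        congr 1
        · rw [← Finset.sum_mul, sq]
        · exact Finset.sum_congr rfl fun a _ => by ring
      rw [hq]
      by_contra hle
      push_neg at hle
      have h1 : 0 ≤ (∑ a, v a) ^ 2 := sq_nonneg _
      have h2 : 0 ≤ ∑ a, d a * (v a) ^ 2 :=
        Finset.sum_nonneg fun a _ => mul_nonneg (hdnn a) (sq_nonneg _)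
      have hsum0 : (∑ a, v a) = 0 := by
        have : (∑ a, v a) ^ 2 = 0 := le_antisymm (by linarith) h1
        exact pow_eq_zero_iff (n := 2) (by norm_num) |>.mp this
      have hterm : ∀ a ∈ Finset.univ, d a * (v a) ^ 2 = 0 := by
        rw [← Finset.sum_eq_zero_iff_of_nonneg fun a _ => mul_nonneg (hdnn a) (sq_nonneg _)]
        linarith
      obtain ⟨c, hc⟩ := Function.ne_iff.mp hv
      have hmc : m c = x := by
        have h0 : d c * (v c) ^ 2 = 0 := hterm c (Finset.mem_univ c)
        have hdc : d c = 0 := by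
          rcases mul_eq_zero.mp h0 with h | h
          · exact h
          · exact absurd (pow_eq_zero_iff (n := 2) (by norm_num) |>.mp h) hc
        exact sub_eq_zero.mp (Quaternion.normSq_eq_zero.mp hdc)
      have hvb : ∀ b, b ≠ c → v b = 0 := by
        intro b hb
        by_contra hvb
        have h0 : d b * (v b) ^ 2 = 0 := hterm b (Finset.mem_univ b)
        have hdb : d b = 0 := by
          rcases mul_eq_zero.mp h0 with h | h
          · exact h
          · exact absurd (pow_eq_zero_iff (n := 2) (by norm_num) |>.mp h) hvb
        have hmb : m b = x := sub_eq_zero.mp (Quaternion.normSq_eq_zero.mp hdb)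
        exact hb (exchangeDiag_injective N t (hmb.trans hmc.symm))
      have hvc : (∑ a, v a) = v c :=
        Finset.sum_eq_single c (fun b _ hb => hvb b hb) (fun h => absurd (Finset.mem_univ c) h)
      exact hc (hvc.symm.trans hsum0)
  refine ⟨hpart1, hpd, ?_, ?_⟩
  · intro a b
    exact ⟨A a b, by rw [hpart1]; rfl⟩
  · rw [hpart1]
    have hu : IsUnit A := hpd.isUnit
    have hmap := hu.map ((algebraMap ℝ ℍ[ℝ]).mapMatrix)
    have heq : A.map (fun r => (r : ℍ[ℝ])) = (algebraMap ℝ ℍ[ℝ]).mapMatrix A := by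
      rw [RingHom.mapMatrix_apply]
      rfl
    rw [heq]
    exact hmap
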